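/- If φ and ψ are a-objective formulas such that L_a φ ∧ N_a ψ is satisfiable in the k-structures semantics, then φ ∨ ψ is valid (semantic version of Lemma: consistency of L_i φ ∧ N_i ψ forces φ ∨ ψ valid). -/

import Mathlib

abbrev Atom := ℕ
abbrev World := Set Atom

/-- `KStr k` : the type of `k`-structures. A 0-structure is the trivial
empty object `PUnit.unit` (playing the role of `∅`); a `(k+1)`-structure is a
set of pairs of a world and a `k`-structure. Thus a 1-structure is a subset of
`W × {∅}`. -/
def KStr : ℕ → Type
  | 0 => PUnit
  | (k+1) => Set (World × KStr k)


def toSet {k : ℕ} (e : KStr (k+1)) : Set (World × KStr k) := e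

instance {k : ℕ} : Membership (World × KStr k) (KStr (k+1)) :=
  inferInstanceAs (Membership _ (Set (World × KStr k)))
instance {k : ℕ} : EmptyCollection (KStr (k+1)) :=
  inferInstanceAs (EmptyCollection (Set (World × KStr k)))
instance {k : ℕ} : Union (KStr (k+1)) :=
  inferInstanceAs (Union (Set (World × KStr k)))
instance {k : ℕ} : Compl (KStr (k+1)) :=
  inferInstanceAs (Compl (Set (World × KStr k)))

def unit0 : KStr 0 := PUnit.unit

/-- Formulas of the propositional multi-agent only-knowing language ONL_n
with modal operators L_a, N_a, L_b, N_b. -/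
inductive Formula : Type
  | atom : Atom → Formula
  | fls  : Formula
  | neg  : Formula → Formula
  | or   : Formula → Formula → Formula
  | La   : Formula → Formula
  | Na   : Formula → Formula
  | Lb   : Formula → Formula
  | Nb   : Formula → Formula

def Formula.and (α β : Formula) : Formula := .neg (.or (.neg α) (.neg β))
def Formula.imp (α β : Formula) : Formula := .or (.neg α) β
/-- O_a α := L_a α ∧ N_a ¬α -/
def Formula.Oa (α : Formula) : Formula := (Formula.La α).and (Formula.Na (.neg α))
/-- O_b α := L_b α ∧ N_b ¬α -/
def Formula.Ob (α : Formula) : Formula := (Formula.Lb α).and (Formula.Nb (.neg α))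

/-- Satisfaction at a (k,j)-model `(ea, eb, w)`. -/
def sat : (k : ℕ) → (j : ℕ) → KStr k → KStr j → World → Formula → Prop
  | _, _, _, _, w, .atom p => p ∈ w
  | _, _, _, _, _, .fls => False
  | k, j, ea, eb, w, .neg α => ¬ sat k j ea eb w α
  | k, j, ea, eb, w, .or α β => sat k j ea eb w α ∨ sat k j ea eb w β
  | 0, _, _, _, _, .La _ => True
  | (k+1), _, ea, _, _, .La α => ∀ p ∈ ea, sat (k+1) k ea p.2 p.1 α
  | 0, _, _, _, _, .Na _ => True
  | (k+1), _, ea, _, _, .Na α => ∀ p : World × KStr k, p ∉ ea → sat (k+1) k ea p.2 p.1 α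
  | _, 0, _, _, _, .Lb _ => True
  | k, (j+1), _, eb, _, .Lb α => ∀ p ∈ eb, sat j (j+1) p.2 eb p.1 α
  | _, 0, _, _, _, .Nb _ => True
  | k, (j+1), _, eb, _, .Nb α => ∀ p : World × KStr j, p ∉ eb → sat j (j+1) p.2 eb p.1 α

mutual
/-- a-depth of a formula -/
def depthA : Formula → ℕ
  | .atom _ => 1
  | .fls => 1
  | .neg α => depthA α
  | .or α β => max (depthA α) (depthA β)
  | .La α => depthA α
  | .Na α => depthA α
  | .Lb α => depthB α + 1
  | .Nb α => depthB α + 1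
/-- b-depth of a formula -/
def depthB : Formula → ℕ
  | .atom _ => 1
  | .fls => 1
  | .neg α => depthB α
  | .or α β => max (depthB α) (depthB β)
  | .Lb α => depthB α
  | .Nb α => depthB α
  | .La α => depthA α + 1
  | .Na α => depthA α + 1
end

/-- the restriction `e↓ₖ` of a structure -/
def restrict : (k : ℕ) → {m : ℕ} → KStr m → KStr k
  | 0, _, _ => unit0
  | (k+1), 0, _ => (∅ : Set (World × KStr k))
  | (k+1), (_+1), e => (fun p => (p.1, restrict k p.2)) '' (toSet e)

/-- validity: truth at all (k,j)-models of appropriate depth -/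
def valid (φ : Formula) : Prop :=
  ∀ (k j : ℕ), depthA φ ≤ k → depthB φ ≤ j →
    ∀ (ea : KStr k) (eb : KStr j) (w : World), sat k j ea eb w φ

def satisfiable (φ : Formula) : Prop :=
  ∃ (k j : ℕ) (ea : KStr k) (eb : KStr j) (w : World),
    depthA φ ≤ k ∧ depthB φ ≤ j ∧ sat k j ea eb w φ

/-- objective (non-modal) formulas -/
def objective : Formula → Prop
  | .atom _ => True
  | .fls => True
  | .neg α => objective α
  | .or α β => objective α ∧ objective β
  | .La _ => False
  | .Na _ => False
  | .Lb _ => False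
  | .Nb _ => False

/-- a-objective: all outermost modal operators are of agent b -/
def aObjective : Formula → Prop
  | .atom _ => True
  | .fls => True
  | .neg α => aObjective α
  | .or α β => aObjective α ∧ aObjective β
  | .La _ => False
  | .Na _ => False
  | .Lb _ => True
  | .Nb _ => True

/-- b-objective: all outermost modal operators are of agent a -/
def bObjective : Formula → Prop
  | .atom _ => True
  | .fls => True
  | .neg α => bObjective α
  | .or α β => bObjective α ∧ bObjective β
  | .La _ => True
  | .Na _ => True
  | .Lb _ => False
  | .Nb _ => False

/-- basic formulas: no N_a, N_b -/
def basic : Formula → Prop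
  | .atom _ => True
  | .fls => True
  | .neg α => basic α
  | .or α β => basic α ∧ basic β
  | .La α => basic α
  | .Lb α => basic α
  | .Na _ => False
  | .Nb _ => False

/-- set of a-objective formulas of b-depth ≤ d true at `(∅, e, w)` -/
def aTheory (d : ℕ) (e : KStr d) (w : World) : Set Formula :=
  {φ | aObjective φ ∧ depthB φ ≤ d ∧ sat 0 d unit0 e w φ}

def bTheory (d : ℕ) (e : KStr d) (w : World) : Set Formula :=
  {φ | bObjective φ ∧ depthA φ ≤ d ∧ sat d 0 e unit0 w φ}

/-- Obj⁺_a(e_a) -/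
def ObjA (d : ℕ) (ea : KStr (d+1)) : Set (Set Formula) :=
  {T | ∃ p : World × KStr d, p ∈ ea ∧ T = aTheory d p.2 p.1}

def ObjB (d : ℕ) (eb : KStr (d+1)) : Set (Set Formula) :=
  {T | ∃ p : World × KStr d, p ∈ eb ∧ T = bTheory d p.2 p.1}

/-- maximally satisfiable set of a-objective formulas of b-depth ≤ d -/
def maxSatA (d : ℕ) (S : Set Formula) : Prop :=
  (∀ φ ∈ S, aObjective φ ∧ depthB φ ≤ d) ∧
  (∃ (e : KStr d) (w : World), ∀ φ ∈ S, sat 0 d unit0 e w φ) ∧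
  (∀ ψ, aObjective ψ → depthB ψ ≤ d → ψ ∉ S →
    ¬ ∃ (e : KStr d) (w : World), ∀ φ ∈ insert ψ S, sat 0 d unit0 e w φ)

def maxSatB (d : ℕ) (S : Set Formula) : Prop :=
  (∀ φ ∈ S, bObjective φ ∧ depthA φ ≤ d) ∧
  (∃ (e : KStr d) (w : World), ∀ φ ∈ S, sat d 0 e unit0 w φ) ∧
  (∀ ψ, bObjective ψ → depthA ψ ≤ d → ψ ∉ S →
    ¬ ∃ (e : KStr d) (w : World), ∀ φ ∈ insert ψ S, sat d 0 e unit0 w φ)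

/-- `onlAux bA bB φ`: φ is admissible where `bA` records that N_a is banned
(we are in the scope of a b-modality) and `bB` that N_b is banned. -/
def onlAux : Bool → Bool → Formula → Prop
  | _, _, .atom _ => True
  | _, _, .fls => True
  | bA, bB, .neg α => onlAux bA bB α
  | bA, bB, .or α β => onlAux bA bB α ∧ onlAux bA bB β
  | bA, _, .La α => onlAux bA true α
  | bA, _, .Na α => bA = false ∧ onlAux bA true α
  | _, bB, .Lb α => onlAux true bB α
  | _, bB, .Nb α => bB = false ∧ onlAux true bB α

/-- ONL_n^- : no N_j in the scope of an L_i or N_i with i ≠ j -/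
def ONLminus (φ : Formula) : Prop := onlAux false false φ

inductive BoolComb (S : Set Formula) : Formula → Prop
  | base {φ} : φ ∈ S → BoolComb S φ
  | neg {φ} : BoolComb S φ → BoolComb S (.neg φ)
  | or {φ ψ} : BoolComb S φ → BoolComb S ψ → BoolComb S (.or φ ψ)

def stepL (S : Set Formula) : Set Formula :=
  {φ | BoolComb (S ∪ {ψ | ∃ α ∈ S, ψ = .La α ∨ ψ = .Na α ∨ ψ = .Lb α ∨ ψ = .Nb α}) φ}

/-- the hierarchy ONL_n^t (t ≥ 1), with ONL_n^1 = ONL_n^- -/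
def ONLt (t : ℕ) : Set Formula := stepL^[t-1] {φ | ONLminus φ}

def conjList : List Formula → Formula
  | [] => .neg .fls
  | (φ :: l) => φ.and (conjList l)

/-- instance of a propositional tautology -/
def Taut (φ : Formula) : Prop :=
  ∀ v : Formula → Bool, (∀ α, v (.neg α) = !v α) →
    (∀ α β, v (.or α β) = (v α || v β)) → v .fls = false → v φ = true

/-- K45_n provability (two agents) -/
inductive K45 : Formula → Prop
  | taut {φ} : Taut φ → K45 φ
  | kA (α β : Formula) : K45 ((Formula.La (α.imp β)).imp ((Formula.La α).imp (Formula.La β)))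
  | kB (α β : Formula) : K45 ((Formula.Lb (α.imp β)).imp ((Formula.Lb α).imp (Formula.Lb β)))
  | fourA (α : Formula) : K45 ((Formula.La α).imp (Formula.La (Formula.La α)))
  | fourB (α : Formula) : K45 ((Formula.Lb α).imp (Formula.Lb (Formula.Lb α)))
  | fiveA (α : Formula) : K45 ((Formula.neg (Formula.La α)).imp (Formula.La (Formula.neg (Formula.La α))))
  | fiveB (α : Formula) : K45 ((Formula.neg (Formula.Lb α)).imp (Formula.Lb (Formula.neg (Formula.Lb α))))
  | mp {α β} : K45 (α.imp β) → K45 α → K45 β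
  | necA {α} : K45 α → K45 (Formula.La α)
  | necB {α} : K45 α → K45 (Formula.Lb α)

def ConsSet (Γ : Set Formula) : Prop :=
  ∀ l : List Formula, (∀ φ ∈ l, φ ∈ Γ) → ¬ K45 (Formula.neg (conjList l))

/-- basic maximally K45_n-consistent set -/
def MCS (Γ : Set Formula) : Prop :=
  (∀ φ ∈ Γ, basic φ) ∧ ConsSet Γ ∧ ∀ φ, basic φ → (φ ∈ Γ ∨ Formula.neg φ ∈ Γ)

/-- worlds of the K45_n canonical model -/
def CW := {Γ : Set Formula // MCS Γ}

def RA (Γ Δ : CW) : Prop := ∀ α, Formula.La α ∈ Γ.val → α ∈ Δ.val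
def RB (Γ Δ : CW) : Prop := ∀ α, Formula.Lb α ∈ Γ.val → α ∈ Δ.val

/-- truth of basic formulas at a world of the canonical model -/
def csat (Γ : CW) : Formula → Prop
  | .atom p => Formula.atom p ∈ Γ.val
  | .fls => False
  | .neg α => ¬ csat Γ α
  | .or α β => csat Γ α ∨ csat Γ β
  | .La α => ∀ Δ : CW, RA Γ Δ → csat Δ α
  | .Lb α => ∀ Δ : CW, RB Γ Δ → csat Δ α
  | .Na _ => True
  | .Nb _ => True

/-- the propositional valuation [w] of a canonical world -/
def wval (Γ : CW) : World := {p | Formula.atom p ∈ Γ.val}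

/-- the (k,j)-correspondence structures; `corr true` is agent a's structure,
`corr false` agent b's -/
def corr : Bool → (k : ℕ) → CW → KStr k
  | _, 0, _ => unit0
  | ag, (k+1), Γ =>
    {p : World × KStr k |
      ∃ Δ : CW, (if ag then RA Γ Δ else RB Γ Δ) ∧ p.1 = wval Δ ∧ p.2 = corr (!ag) k Δ}

/-! ### auxiliary machinery for STATEMENT 16 -/

def atoms : Formula → Set Atom
  | .atom p => {p}
  | .fls => ∅
  | .neg α => atoms α
  | .or α β => atoms α ∪ atoms β
  | .La α => atoms α
  | .Na α => atoms α
  | .Lb α => atoms α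
  | .Nb α => atoms α

def abound : Formula → ℕ
  | .atom p => p + 1
  | .fls => 0
  | .neg α => abound α
  | .or α β => max (abound α) (abound β)
  | .La α => abound α
  | .Na α => abound α
  | .Lb α => abound α
  | .Nb α => abound α

theorem atoms_lt_abound : ∀ φ : Formula, ∀ a ∈ atoms φ, a < abound φ := by
  intro φ
  induction φ with
  | atom p => intro a ha; simp [atoms] at ha; simp [abound, ha]
  | fls => intro a ha; simp [atoms] at ha
  | neg α ih => intro a ha; exact ih a ha
  | or α β ih1 ih2 =>
      intro a ha
      rcases ha with h | h
      · exact lt_of_lt_of_le (ih1 a h) (by simp [abound])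
      · exact lt_of_lt_of_le (ih2 a h) (by simp [abound])
  | La α ih => exact ih
  | Na α ih => exact ih
  | Lb α ih => exact ih
  | Nb α ih => exact ih

/-- depth of "unguarded" a-modalities -/
def useA : Formula → ℕ
  | .atom _ => 0
  | .fls => 0
  | .neg α => useA α
  | .or α β => max (useA α) (useA β)
  | .La α => depthA α
  | .Na α => depthA α
  | .Lb _ => 0
  | .Nb _ => 0

/-- depth of "unguarded" b-modalities -/
def useB : Formula → ℕ
  | .atom _ => 0
  | .fls => 0
  | .neg α => useB α
  | .or α β => max (useB α) (useB β)
  | .La _ => 0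
  | .Na _ => 0
  | .Lb α => depthB α
  | .Nb α => depthB α

theorem depth_pos (φ : Formula) : 1 ≤ depthA φ ∧ 1 ≤ depthB φ := by
  induction φ <;> simp [depthA, depthB] at * <;> omega

theorem use_bounds (φ : Formula) :
    useA φ ≤ depthA φ ∧ useB φ + 1 ≤ depthA φ ∧
    useB φ ≤ depthB φ ∧ useA φ + 1 ≤ depthB φ := by
  induction φ with
  | atom p => simp [useA, useB, depthA, depthB]
  | fls => simp [useA, useB, depthA, depthB]
  | neg α ih => simpa [useA, useB, depthA, depthB] using ih
  | or α β ih1 ih2 => simp [useA, useB, depthA, depthB] at *; omega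
  | La α ih => have := depth_pos α; simp [useA, useB, depthA, depthB] at *; omega
  | Na α ih => have := depth_pos α; simp [useA, useB, depthA, depthB] at *; omega
  | Lb α ih => have := depth_pos α; simp [useA, useB, depthA, depthB] at *; omega
  | Nb α ih => have := depth_pos α; simp [useA, useB, depthA, depthB] at *; omega

theorem aObjective_useA (φ : Formula) (h : aObjective φ) : useA φ = 0 := by
  induction φ with
  | atom p => simp [useA]
  | fls => simp [useA]
  | neg α ih => exact ih h
  | or α β ih1 ih2 =>
      obtain ⟨h1, h2⟩ := h
      simp [useA, ih1 h1, ih2 h2]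
  | La α ih => exact absurd h (by simp [aObjective])
  | Na α ih => exact absurd h (by simp [aObjective])
  | Lb α ih => simp [useA]
  | Nb α ih => simp [useA]

/-- equality of worlds on the atom set `A` -/
def wEq (A : Set Atom) (w w' : World) : Prop := ∀ a ∈ A, (a ∈ w ↔ a ∈ w')

theorem wEq_refl (A : Set Atom) (w : World) : wEq A w w := fun _ _ => Iff.rfl

theorem wEq_symm {A : Set Atom} {w w' : World} (h : wEq A w w') : wEq A w' w :=
  fun a ha => (h a ha).symm

theorem wEq_sdiff {A : Set Atom} {a₀ : Atom} (ha : a₀ ∉ A) (w : World) :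
    wEq A (w \ {a₀}) w := by
  intro a ha'
  simp only [Set.mem_diff, Set.mem_singleton_iff]
  constructor
  · rintro ⟨h, _⟩; exact h
  · intro h; exact ⟨h, fun hc => ha (hc ▸ ha')⟩

theorem wEq_union {A : Set Atom} {a₀ : Atom} (ha : a₀ ∉ A) (w : World) :
    wEq A (w ∪ {a₀}) w := by
  intro a ha'
  simp only [Set.mem_union, Set.mem_singleton_iff]
  constructor
  · rintro (h | h)
    · exact h
    · exact absurd ha' (h ▸ ha)
  · intro h; exact Or.inl h

/-- structural equivalence of `k`-structures with "budget" `d`, relative to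
atom set `A` -/
def SEq (A : Set Atom) : ℕ → (m : ℕ) → (j : ℕ) → KStr m → KStr j → Prop
  | 0, _, _, _, _ => True
  | _+1, 0, _, _, _ => True
  | _+1, _+1, 0, _, _ => True
  | d+1, m+1, j+1, e, f =>
      (∀ p ∈ toSet e, ∃ q ∈ toSet f, wEq A p.1 q.1 ∧ SEq A d m j p.2 q.2) ∧
      (∀ q ∈ toSet f, ∃ p ∈ toSet e, wEq A p.1 q.1 ∧ SEq A d m j p.2 q.2) ∧
      (∀ p : World × KStr m, p ∉ toSet e →
        ∃ q : World × KStr j, q ∉ toSet f ∧ wEq A p.1 q.1 ∧ SEq A d m j p.2 q.2) ∧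
      (∀ q : World × KStr j, q ∉ toSet f →
        ∃ p : World × KStr m, p ∉ toSet e ∧ wEq A p.1 q.1 ∧ SEq A d m j p.2 q.2)

theorem SEq_symm {A : Set Atom} :
    ∀ (d m j : ℕ) (e : KStr m) (f : KStr j), SEq A d m j e f → SEq A d j m f e := by
  intro d
  induction d with
  | zero => intro m j e f _; exact trivial
  | succ d ih =>
      intro m j e f h
      match m, j with
      | 0, 0 => exact trivial
      | 0, j+1 => exact trivial
      | m+1, 0 => exact trivial
      | m+1, j+1 =>
          obtain ⟨c1, c2, c3, c4⟩ := h
          refine ⟨?_, ?_, ?_, ?_⟩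
          · intro q hq
            obtain ⟨p, hp, hw, hs⟩ := c2 q hq
            exact ⟨p, hp, wEq_symm hw, ih _ _ _ _ hs⟩
          · intro p hp
            obtain ⟨q, hq, hw, hs⟩ := c1 p hp
            exact ⟨q, hq, wEq_symm hw, ih _ _ _ _ hs⟩
          · intro q hq
            obtain ⟨p, hp, hw, hs⟩ := c4 q hq
            exact ⟨p, hp, wEq_symm hw, ih _ _ _ _ hs⟩
          · intro p hp
            obtain ⟨q, hq, hw, hs⟩ := c3 p hp
            exact ⟨q, hq, wEq_symm hw, ih _ _ _ _ hs⟩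

def kstrDefault : (m : ℕ) → KStr m
  | 0 => unit0
  | _+1 => (∅ : Set _)
/-- Realization: every structure of depth `j ≥ d` has a budget-`d`
structurally equivalent counterpart at any depth `m ≥ d`. -/
theorem SEq_real {A : Set Atom} {a₀ : Atom} (ha : a₀ ∉ A) :
    ∀ (d m j : ℕ), d ≤ m → d ≤ j → ∀ e : KStr j, ∃ e' : KStr m, SEq A d m j e' e := by
  intro d
  induction d with
  | zero =>
      intro m j _ _ e
      exact ⟨kstrDefault m, trivial⟩
  | succ d ih =>
      intro m j hm hj e
      match m, j, hm, hj with
      | m+1, j+1, hm, hj =>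
        have hm' : d ≤ m := by omega
        have hj' : d ≤ j := by omega
        -- lift in the other direction, via symmetry
        have lift : ∀ x : KStr m, ∃ y : KStr j, SEq A d m j x y := by
          intro x
          obtain ⟨y, hy⟩ := ih j m hj' hm' x
          exact ⟨y, SEq_symm _ _ _ _ _ hy⟩
        refine ⟨show KStr (m+1) from
          ({p : World × KStr m |
              (∃ q ∈ toSet e, wEq A p.1 q.1 ∧ SEq A d m j p.2 q.2) ∧
              (a₀ ∈ p.1 →
                ¬ ∃ q : World × KStr j, q ∉ toSet e ∧ wEq A p.1 q.1 ∧ SEq A d m j p.2 q.2)}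
            : Set (World × KStr m)), ?_⟩
        refine ⟨?_, ?_, ?_, ?_⟩
        · -- members of e' are linked to members of e
          intro p hp
          exact hp.1
        · -- members of e are linked from members of e'
          intro q hq
          obtain ⟨x, hx⟩ := ih m j hm' hj' q.2
          refine ⟨(q.1 \ {a₀}, x), ?_, wEq_sdiff ha q.1, hx⟩
          refine ⟨⟨q, hq, wEq_sdiff ha q.1, hx⟩, ?_⟩
          intro hmem
          exact absurd hmem (by simp)
        · -- non-members of e' are linked to non-members of e
          intro p hp
          by_cases hlink : ∃ q ∈ toSet e, wEq A p.1 q.1 ∧ SEq A d m j p.2 q.2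
          · -- p must have been excluded: a₀ ∈ p.1 and it is linked outside e
            have : ¬ (a₀ ∈ p.1 →
                ¬ ∃ q : World × KStr j, q ∉ toSet e ∧ wEq A p.1 q.1 ∧ SEq A d m j p.2 q.2) := by
              intro hcl
              exact hp ⟨hlink, hcl⟩
            push_neg at this
            obtain ⟨q, hq, hw, hs⟩ := this.2
            exact ⟨q, hq, hw, hs⟩
          · -- p is linked to nothing in e: its lift is outside e
            obtain ⟨y, hy⟩ := lift p.2
            refine ⟨(p.1, y), ?_, wEq_refl A p.1, hy⟩
            intro hmem
            exact hlink ⟨(p.1, y), hmem, wEq_refl A p.1, hy⟩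
        · -- non-members of e are linked from non-members of e'
          intro q hq
          obtain ⟨x, hx⟩ := ih m j hm' hj' q.2
          refine ⟨(q.1 ∪ {a₀}, x), ?_, wEq_union ha q.1, hx⟩
          intro hmem
          exact hmem.2 (by simp) ⟨q, hq, wEq_union ha q.1, hx⟩
/-- Transfer of satisfaction along budgeted structural equivalence. -/
theorem sat_transfer (A : Set Atom) :
    ∀ α : Formula, atoms α ⊆ A →
    ∀ (da db ka ja kb jb : ℕ) (x : KStr ka) (y : KStr ja) (E1 : KStr kb) (E2 : KStr jb)
      (w w' : World),
      useA α ≤ da → useB α ≤ db → da ≤ ka → da ≤ ja → db ≤ kb → db ≤ jb →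
      SEq A da ka ja x y → SEq A db kb jb E1 E2 → wEq A w w' →
      (sat ka kb x E1 w α ↔ sat ja jb y E2 w' α) := by
  intro α
  induction α with
  | atom p =>
      intro hA da db ka ja kb jb x y E1 E2 w w' _ _ _ _ _ _ _ _ hw
      simp only [sat]
      exact hw p (hA (by simp [atoms]))
  | fls =>
      intro _ da db ka ja kb jb x y E1 E2 w w' _ _ _ _ _ _ _ _ _
      simp [sat]
  | neg γ ih =>
      intro hA da db ka ja kb jb x y E1 E2 w w' h1 h2 h3 h4 h5 h6 hx hE hw
      simp only [sat]
      exact not_congr (ih hA da db ka ja kb jb x y E1 E2 w w' h1 h2 h3 h4 h5 h6 hx hE hw)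
  | or γ δ ih1 ih2 =>
      intro hA da db ka ja kb jb x y E1 E2 w w' h1 h2 h3 h4 h5 h6 hx hE hw
      have hAg : atoms γ ⊆ A := fun a haa => hA (Or.inl haa)
      have hAd : atoms δ ⊆ A := fun a haa => hA (Or.inr haa)
      have hg1 : useA γ ≤ da := le_trans (le_max_left _ _) h1
      have hd1 : useA δ ≤ da := le_trans (le_max_right _ _) h1
      have hg2 : useB γ ≤ db := le_trans (le_max_left _ _) h2
      have hd2 : useB δ ≤ db := le_trans (le_max_right _ _) h2
      simp only [sat]
      exact or_congr (ih1 hAg da db ka ja kb jb x y E1 E2 w w' hg1 hg2 h3 h4 h5 h6 hx hE hw)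
        (ih2 hAd da db ka ja kb jb x y E1 E2 w w' hd1 hd2 h3 h4 h5 h6 hx hE hw)
  | La γ ih =>
      intro hA da db ka ja kb jb x y E1 E2 w w' h1 h2 h3 h4 h5 h6 hx hE hw
      have hdg : 1 ≤ depthA γ := (depth_pos γ).1
      have h1' : depthA γ ≤ da := by simpa [useA] using h1
      obtain ⟨da, rfl⟩ : ∃ t, da = t + 1 := ⟨da - 1, by omega⟩
      obtain ⟨ka, rfl⟩ : ∃ t, ka = t + 1 := ⟨ka - 1, by omega⟩
      obtain ⟨ja, rfl⟩ : ∃ t, ja = t + 1 := ⟨ja - 1, by omega⟩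
      obtain ⟨c1, c2, c3, c4⟩ := hx
      have hug : useA γ ≤ da + 1 := le_trans (use_bounds γ).1 h1'
      have hvg : useB γ ≤ da := by have := (use_bounds γ).2.1; omega
      simp only [sat]
      constructor
      · intro hL q hq
        obtain ⟨p, hp, hww, hs⟩ := c2 q hq
        exact (ih (by simpa [atoms] using hA) (da+1) da (ka+1) (ja+1) ka ja x y p.2 q.2
          p.1 q.1 hug hvg h3 h4 (by omega) (by omega) ⟨c1, c2, c3, c4⟩ hs hww).mp (hL p hp)
      · intro hL p hp
        obtain ⟨q, hq, hww, hs⟩ := c1 p hp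
        exact (ih (by simpa [atoms] using hA) (da+1) da (ka+1) (ja+1) ka ja x y p.2 q.2
          p.1 q.1 hug hvg h3 h4 (by omega) (by omega) ⟨c1, c2, c3, c4⟩ hs hww).mpr (hL q hq)
  | Na γ ih =>
      intro hA da db ka ja kb jb x y E1 E2 w w' h1 h2 h3 h4 h5 h6 hx hE hw
      have hdg : 1 ≤ depthA γ := (depth_pos γ).1
      have h1' : depthA γ ≤ da := by simpa [useA] using h1
      obtain ⟨da, rfl⟩ : ∃ t, da = t + 1 := ⟨da - 1, by omega⟩
      obtain ⟨ka, rfl⟩ : ∃ t, ka = t + 1 := ⟨ka - 1, by omega⟩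
      obtain ⟨ja, rfl⟩ : ∃ t, ja = t + 1 := ⟨ja - 1, by omega⟩
      obtain ⟨c1, c2, c3, c4⟩ := hx
      have hug : useA γ ≤ da + 1 := le_trans (use_bounds γ).1 h1'
      have hvg : useB γ ≤ da := by have := (use_bounds γ).2.1; omega
      simp only [sat]
      constructor
      · intro hL q hq
        obtain ⟨p, hp, hww, hs⟩ := c4 q hq
        exact (ih (by simpa [atoms] using hA) (da+1) da (ka+1) (ja+1) ka ja x y p.2 q.2
          p.1 q.1 hug hvg h3 h4 (by omega) (by omega) ⟨c1, c2, c3, c4⟩ hs hww).mp (hL p hp)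
      · intro hL p hp
        obtain ⟨q, hq, hww, hs⟩ := c3 p hp
        exact (ih (by simpa [atoms] using hA) (da+1) da (ka+1) (ja+1) ka ja x y p.2 q.2
          p.1 q.1 hug hvg h3 h4 (by omega) (by omega) ⟨c1, c2, c3, c4⟩ hs hww).mpr (hL q hq)
  | Lb γ ih =>
      intro hA da db ka ja kb jb x y E1 E2 w w' h1 h2 h3 h4 h5 h6 hx hE hw
      have hdg : 1 ≤ depthB γ := (depth_pos γ).2
      have h2' : depthB γ ≤ db := by simpa [useB] using h2
      obtain ⟨db, rfl⟩ : ∃ t, db = t + 1 := ⟨db - 1, by omega⟩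
      obtain ⟨kb, rfl⟩ : ∃ t, kb = t + 1 := ⟨kb - 1, by omega⟩
      obtain ⟨jb, rfl⟩ : ∃ t, jb = t + 1 := ⟨jb - 1, by omega⟩
      obtain ⟨c1, c2, c3, c4⟩ := hE
      have hug : useA γ ≤ db := by have := (use_bounds γ).2.2.2; omega
      have hvg : useB γ ≤ db + 1 := le_trans (use_bounds γ).2.2.1 h2'
      simp only [sat]
      constructor
      · intro hL q hq
        obtain ⟨p, hp, hww, hs⟩ := c2 q hq
        exact (ih (by simpa [atoms] using hA) db (db+1) kb jb (kb+1) (jb+1) p.2 q.2 E1 E2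
          p.1 q.1 hug hvg (by omega) (by omega) h5 h6 hs ⟨c1, c2, c3, c4⟩ hww).mp (hL p hp)
      · intro hL p hp
        obtain ⟨q, hq, hww, hs⟩ := c1 p hp
        exact (ih (by simpa [atoms] using hA) db (db+1) kb jb (kb+1) (jb+1) p.2 q.2 E1 E2
          p.1 q.1 hug hvg (by omega) (by omega) h5 h6 hs ⟨c1, c2, c3, c4⟩ hww).mpr (hL q hq)
  | Nb γ ih =>
      intro hA da db ka ja kb jb x y E1 E2 w w' h1 h2 h3 h4 h5 h6 hx hE hw
      have hdg : 1 ≤ depthB γ := (depth_pos γ).2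
      have h2' : depthB γ ≤ db := by simpa [useB] using h2
      obtain ⟨db, rfl⟩ : ∃ t, db = t + 1 := ⟨db - 1, by omega⟩
      obtain ⟨kb, rfl⟩ : ∃ t, kb = t + 1 := ⟨kb - 1, by omega⟩
      obtain ⟨jb, rfl⟩ : ∃ t, jb = t + 1 := ⟨jb - 1, by omega⟩
      obtain ⟨c1, c2, c3, c4⟩ := hE
      have hug : useA γ ≤ db := by have := (use_bounds γ).2.2.2; omega
      have hvg : useB γ ≤ db + 1 := le_trans (use_bounds γ).2.2.1 h2'
      simp only [sat]
      constructor
      · intro hL q hq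
        obtain ⟨p, hp, hww, hs⟩ := c4 q hq
        exact (ih (by simpa [atoms] using hA) db (db+1) kb jb (kb+1) (jb+1) p.2 q.2 E1 E2
          p.1 q.1 hug hvg (by omega) (by omega) h5 h6 hs ⟨c1, c2, c3, c4⟩ hww).mp (hL p hp)
      · intro hL p hp
        obtain ⟨q, hq, hww, hs⟩ := c3 p hp
        exact (ih (by simpa [atoms] using hA) db (db+1) kb jb (kb+1) (jb+1) p.2 q.2 E1 E2
          p.1 q.1 hug hvg (by omega) (by omega) h5 h6 hs ⟨c1, c2, c3, c4⟩ hww).mpr (hL q hq)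
/-- if φ, ψ are a-objective and L_a φ ∧ N_a ψ is satisfiable,
then φ ∨ ψ is valid. -/
theorem La_Na_forces_valid (φ ψ : Formula) (h1 : aObjective φ) (h2 : aObjective ψ)
    (h : satisfiable ((Formula.La φ).and (Formula.Na ψ))) :
    valid (Formula.or φ ψ) := by
  obtain ⟨k, j₀, ea, eb₀, w₀, hak, hbk, hs⟩ := h
  have hs' : sat k j₀ ea eb₀ w₀ (.La φ) ∧ sat k j₀ ea eb₀ w₀ (.Na ψ) := by
    simpa only [Formula.and, sat, not_or, not_not] using hs
  have hak' : max (depthA φ) (depthA ψ) ≤ k := by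
    simpa [Formula.and, depthA] using hak
  obtain ⟨m, rfl⟩ : ∃ t, k = t + 1 := ⟨k - 1, by have := (depth_pos φ).1; omega⟩
  have hL : ∀ p ∈ ea, sat (m+1) m ea p.2 p.1 φ := by
    have := hs'.1; simp only [sat] at this; exact this
  have hN : ∀ p : World × KStr m, p ∉ ea → sat (m+1) m ea p.2 p.1 ψ := by
    have := hs'.2; simp only [sat] at this; exact this
  intro K J hK hJ EA EB w
  have hJ' : max (depthB φ) (depthB ψ) ≤ J := by simpa [depthB] using hJ
  have ha₀ : max (abound φ) (abound ψ) ∉ atoms φ ∪ atoms ψ := by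
    intro hc
    rcases hc with hc | hc
    · exact absurd (atoms_lt_abound φ _ hc) (not_lt.mpr (le_max_left _ _))
    · exact absurd (atoms_lt_abound ψ _ hc) (not_lt.mpr (le_max_right _ _))
  have hdbm : max (useB φ) (useB ψ) ≤ m := by
    have := (use_bounds φ).2.1; have := (use_bounds ψ).2.1; omega
  have hdbJ : max (useB φ) (useB ψ) ≤ J := by
    have := (use_bounds φ).2.2.1; have := (use_bounds ψ).2.2.1; omega
  obtain ⟨e', hSE⟩ := SEq_real ha₀ (max (useB φ) (useB ψ)) m J hdbm hdbJ EB
  simp only [sat]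
  by_cases hp : ((w, e') : World × KStr m) ∈ ea
  · left
    exact (sat_transfer (atoms φ ∪ atoms ψ) φ Set.subset_union_left
      0 (max (useB φ) (useB ψ)) (m+1) K m J ea EA e' EB w w
      (by simp [aObjective_useA φ h1]) (le_max_left _ _) (by omega) (by omega)
      hdbm hdbJ trivial hSE (wEq_refl _ w)).mp (hL _ hp)
  · right
    exact (sat_transfer (atoms φ ∪ atoms ψ) ψ Set.subset_union_right
      0 (max (useB φ) (useB ψ)) (m+1) K m J ea EA e' EB w w
      (by simp [aObjective_useA ψ h2]) (le_max_right _ _) (by omega) (by omega)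
      hdbm hdbJ trivial hSE (wEq_refl _ w)).mp (hN _ hp)
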